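/- arXiv:1708.07466 — 6 statements merged into one kernel-verified Lean document; each statement's English description precedes it below -/
import Mathlib

section
/- Let U = (U_1,...,U_d) be independent random variables and f measurable with f(U) square-integrable. For 1 ≤ i ≤ d, if f_i : F^i → ℝ is measurable and f_i(U_1,...,U_i) is square-integrable, then C(i) ≤ Var(f(U) - f_i(U_1,...,U_i)), where C(i) = Var(E[f(U) | U_{i+1},...,U_d]). -/
open MeasureTheory ProbabilityTheory

private lemma my_variance_congr {Ω : Type*} {_mΩ : MeasurableSpace Ω} {μ : Measure Ω} {X Y : Ω → ℝ}
    (h : X =ᵐ[μ] Y) : variance X μ = variance Y μ := by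
  have hint : μ[X] = μ[Y] := integral_congr_ae h
  unfold variance evariance
  rw [hint]
  congr 1
  exact lintegral_congr_ae (h.mono fun ω hω => by simp only [hω])

private lemma my_memℒp_condexp {α : Type*} {m : MeasurableSpace α} {m0 : MeasurableSpace α}
    (hm : m ≤ m0) (μ : Measure α) [IsProbabilityMeasure μ] {f : α → ℝ} (hf : MemLp f 2 μ) :
    MemLp (μ[f|m]) 2 μ := by
  have hfi : Integrable f μ := hf.integrable one_le_two
  set fL : Lp ℝ 2 μ := hf.toLp f with hfL
  have heq : (condExpL2 ℝ ℝ hm fL : α → ℝ) =ᵐ[μ] μ[f|m] := by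
    refine ae_eq_condExp_of_forall_setIntegral_eq hm hfi
      (fun s _ hμs => integrableOn_condExpL2_of_measure_ne_top hm hμs.ne _)
      (fun s hs hμs => ?_) (aestronglyMeasurable_condExpL2 hm _)
    rw [integral_condExpL2_eq hm fL hs hμs.ne]
    exact setIntegral_congr_ae (hm s hs) ((hf.coeFn_toLp).mono fun x hx _ => hx)
  exact (Lp.memLp _).ae_eq heq

private lemma my_variance_condexp_le {α : Type*} {m : MeasurableSpace α} {m0 : MeasurableSpace α}
    (hm : m ≤ m0) (μ : Measure α) [IsProbabilityMeasure μ] {Z : α → ℝ} (hZ : MemLp Z 2 μ) :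
    variance (μ[Z|m]) μ ≤ variance Z μ := by
  set g : α → ℝ := μ[Z|m] with hg_def
  have hg2 : MemLp g 2 μ := my_memℒp_condexp hm μ hZ
  have hZint : Integrable Z μ := hZ.integrable one_le_two
  have hmul : Integrable (g * Z) μ := by
    have := L2.integrable_inner (𝕜 := ℝ) (hg2.toLp g) (hZ.toLp Z)
    refine this.congr ?_
    filter_upwards [hg2.coeFn_toLp, hZ.coeFn_toLp] with x h1 h2
    simp [h1, h2, RCLike.inner_apply, mul_comm]
  have key : ∫ x, g x * Z x ∂μ = ∫ x, g x * g x ∂μ := by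
    have h1' : ∫ x, (μ[g * Z|m]) x ∂μ = ∫ x, (g * Z) x ∂μ := integral_condExp hm
    have h1 : ∫ x, (g * Z) x ∂μ = ∫ x, (μ[g * Z|m]) x ∂μ := h1'.symm
    have h2 : μ[g * Z|m] =ᵐ[μ] g * μ[Z|m] :=
      condExp_mul_of_stronglyMeasurable_left stronglyMeasurable_condExp hmul hZint
    calc ∫ x, g x * Z x ∂μ = ∫ x, (μ[g * Z|m]) x ∂μ := h1
      _ = ∫ x, (g * μ[Z|m]) x ∂μ := integral_congr_ae h2
      _ = ∫ x, g x * g x ∂μ := rfl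
  have hsq : ∫ x, g x ^ 2 ∂μ ≤ ∫ x, Z x ^ 2 ∂μ := by
    have h0 : 0 ≤ ∫ x, (Z x - g x) ^ 2 ∂μ := integral_nonneg fun x => sq_nonneg _
    have hexp : ∫ x, (Z x - g x) ^ 2 ∂μ
        = ∫ x, Z x ^ 2 ∂μ - 2 * ∫ x, g x * Z x ∂μ + ∫ x, g x ^ 2 ∂μ := by
      have h1 : ∀ x, (Z x - g x) ^ 2 = Z x ^ 2 - 2 * (g x * Z x) + g x ^ 2 := fun x => by ring
      simp_rw [h1]
      have hmul' : Integrable (fun x => g x * Z x) μ := hmul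
      have hA : Integrable (fun x => Z x ^ 2 - 2 * (g x * Z x)) μ :=
        (hZ.integrable_sq).sub (hmul'.const_mul 2)
      have e1 : ∫ x, (Z x ^ 2 - 2 * (g x * Z x) + g x ^ 2) ∂μ
          = (∫ x, (Z x ^ 2 - 2 * (g x * Z x)) ∂μ) + ∫ x, g x ^ 2 ∂μ :=
        integral_add hA hg2.integrable_sq
      have e2 : ∫ x, (Z x ^ 2 - 2 * (g x * Z x)) ∂μ
          = (∫ x, Z x ^ 2 ∂μ) - ∫ x, 2 * (g x * Z x) ∂μ :=
        integral_sub hZ.integrable_sq (hmul'.const_mul 2)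
      have e3 : ∫ x, 2 * (g x * Z x) ∂μ = 2 * ∫ x, g x * Z x ∂μ :=
        integral_const_mul 2 _
      rw [e1, e2, e3]
    have hgg : ∫ x, g x * g x ∂μ = ∫ x, g x ^ 2 ∂μ := by simp_rw [← sq]
    rw [hexp, key, hgg] at h0
    linarith
  have hmean : ∫ x, (μ[Z|m]) x ∂μ = ∫ x, Z x ∂μ := integral_condExp hm
  rw [variance_eq_sub hg2, variance_eq_sub hZ]
  simp only [Pi.pow_apply]
  have : μ[g] = μ[Z] := hmean
  rw [this]
  exact sub_le_sub_right hsq _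

private lemma my_variance_sub_const {α : Type*} {_mα : MeasurableSpace α} {μ : Measure α}
    [IsProbabilityMeasure μ] {X : α → ℝ} (hX : MemLp X 2 μ) (c : ℝ) :
    variance (fun ω => X ω - c) μ = variance X μ := by
  have hXc : MemLp (fun ω => X ω - c) 2 μ := hX.sub (memLp_const c)
  rw [variance_eq_integral hXc.aemeasurable, variance_eq_integral hX.aemeasurable]
  have hmean : μ[fun ω => X ω - c] = μ[X] - c := by
    rw [integral_sub (hX.integrable one_le_two) (integrable_const c)]
    simp
  congr 1
  funext ω
  simp only [Pi.pow_apply, Pi.sub_apply, hmean]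
  ring

/-- `C i ≤ Var(f(U) - f_i(U_1, …, U_i))` for any measurable `f_i` of
the first `i` coordinates with `f_i(U_1, …, U_i)` square-integrable.
Indices are 0-based: `U j` stands for `U_{j+1}`. -/
theorem stmt_2 {Ω F : Type*} [MeasurableSpace Ω] [mF : MeasurableSpace F]
    (μ : Measure Ω) [IsProbabilityMeasure μ]
    (d : ℕ) (U : Fin d → Ω → F)
    (hUmeas : ∀ j, Measurable (U j))
    (hUindep : iIndepFun (m := fun _ => mF) U μ)
    (f : (Fin d → F) → ℝ) (hf : Measurable f)
    (hfL2 : MemLp (fun ω => f (fun j => U j ω)) 2 μ)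
    (i : ℕ) (hi : 1 ≤ i) (hid : i ≤ d)
    (fi : ({j : Fin d // (j : ℕ) < i} → F) → ℝ) (hfi : Measurable fi)
    (hfiL2 : MemLp (fun ω => fi (fun j => U j.1 ω)) 2 μ) :
    variance
      (μ[(fun ω => f (fun j => U j ω)) |
        ⨆ j : {j : Fin d // i ≤ (j : ℕ)}, MeasurableSpace.comap (U j) mF]) μ ≤
    variance (fun ω => f (fun j => U j ω) - fi (fun j => U j.1 ω)) μ := by
  rename_i m0 hP
  set X : Ω → ℝ := fun ω => f (fun j => U j ω) with hX_def
  set Y : Ω → ℝ := fun ω => fi (fun j => U j.1 ω) with hY_def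
  set m : MeasurableSpace Ω :=
    ⨆ j : {j : Fin d // i ≤ (j : ℕ)}, MeasurableSpace.comap (U j) mF with hm_def
  set m₁ : MeasurableSpace Ω :=
    ⨆ j : {j : Fin d // (j : ℕ) < i}, MeasurableSpace.comap (U j.1) mF with hm₁_def
  have hm : m ≤ m0 := iSup_le fun j => (hUmeas j.1).comap_le
  have hm₁ : m₁ ≤ m0 := iSup_le fun j => (hUmeas j.1).comap_le
  have hXint : Integrable X μ := hfL2.integrable one_le_two
  have hYint : Integrable Y μ := hfiL2.integrable one_le_two
  -- Y is strongly measurable w.r.t. m₁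
  have hYsm : StronglyMeasurable[m₁] Y := by
    set T : Ω → ({j : Fin d // (j : ℕ) < i} → F) := fun ω j => U j.1 ω with hT_def
    have hcomap : MeasurableSpace.comap T MeasurableSpace.pi = m₁ := by
      rw [hm₁_def]
      rw [MeasurableSpace.pi, MeasurableSpace.comap_iSup]
      congr 1
      funext j
      rw [MeasurableSpace.comap_comp]
      rfl
    have hT : Measurable[MeasurableSpace.comap T MeasurableSpace.pi] T :=
      Measurable.of_comap_le le_rfl
    have : Measurable[m₁] Y := by
      rw [← hcomap]
      exact hfi.comp hT
    exact this.stronglyMeasurable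
  -- independence of m₁ and m
  have hindep : Indep m₁ m μ := by
    have hiI : iIndep (fun j => MeasurableSpace.comap (U j) mF) μ := hUindep.iIndep
    have hdisj : Disjoint {j : Fin d | (j : ℕ) < i} {j : Fin d | i ≤ (j : ℕ)} := by
      rw [Set.disjoint_left]
      intro a ha ha'
      simp only [Set.mem_setOf_eq] at ha ha'
      omega
    have h := indep_iSup_of_disjoint (fun j => (hUmeas j).comap_le) hiI hdisj
    have e1 : m₁ = ⨆ j ∈ {j : Fin d | (j : ℕ) < i}, MeasurableSpace.comap (U j) mF :=
      iSup_subtype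
    have e2 : m = ⨆ j ∈ {j : Fin d | i ≤ (j : ℕ)}, MeasurableSpace.comap (U j) mF :=
      iSup_subtype
    rw [e1, e2]
    exact h
  haveI : SigmaFinite (μ.trim hm) := by infer_instance
  -- conditional expectation of Y is constant
  have hYcond : μ[Y|m] =ᵐ[μ] fun _ => μ[Y] :=
    condExp_indep_eq hm₁ hm hYsm hindep
  -- conditional expectation of Z
  have hZL2 : MemLp (fun ω => X ω - Y ω) 2 μ := hfL2.sub hfiL2
  have hZcond : μ[fun ω => X ω - Y ω|m] =ᵐ[μ] fun ω => (μ[X|m]) ω - μ[Y] := by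
    have h1 : μ[fun ω => X ω - Y ω|m] =ᵐ[μ] μ[X|m] - μ[Y|m] := condExp_sub hXint hYint m
    filter_upwards [h1, hYcond] with ω h1ω h2ω
    rw [h1ω]
    simp [h2ω]
  have e1 : variance (μ[X|m]) μ = variance (μ[fun ω => X ω - Y ω|m]) μ := by
    rw [my_variance_congr hZcond,
      my_variance_sub_const (my_memℒp_condexp hm μ hfL2) (μ[Y])]
  rw [e1]
  exact my_variance_condexp_le hm μ hZL2
end

section
/- Let 0 = t_0 < t_1 < ... < t_d and let ν = (ν_0,...,ν_d) with ν_0,...,ν_{d-1} > 0, ν_d = 0, such that the sequence ν_i/t_{i+1} is decreasing in i for 0 ≤ i ≤ d-1. Define q_i = sqrt(t_1 ν_i / (ν_0 t_{i+1})) for 0 ≤ i ≤ d-1. Then R(q) := (Σ_{i=0}^{d-1} q_i (t_{i+1} - t_i)) · (Σ_{i=0}^{d-1} (ν_i - ν_{i+1})/q_i) ≤ 4 (Σ_{i=0}^{d-1} sqrt(ν_i) (sqrt(t_{i+1}) - sqrt(t_i)))^2. -/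
theorem stmt_5 (d : ℕ) (hd : 1 ≤ d) (t ν : ℕ → ℝ)
    (ht0 : t 0 = 0) (htmono : ∀ i < d, t i < t (i + 1))
    (hνpos : ∀ i < d, 0 < ν i) (hνd : ν d = 0)
    (hνdec : ∀ i, i + 1 < d → ν (i + 1) / t (i + 2) ≤ ν i / t (i + 1))
    (q : ℕ → ℝ)
    (hq : ∀ i < d, q i = Real.sqrt (t 1 * ν i / (ν 0 * t (i + 1)))) :
    (∑ i ∈ Finset.range d, q i * (t (i + 1) - t i)) *
      (∑ i ∈ Finset.range d, (ν i - ν (i + 1)) / q i) ≤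
    4 * (∑ i ∈ Finset.range d, Real.sqrt (ν i) * (Real.sqrt (t (i + 1)) - Real.sqrt (t i))) ^ 2 := by
  -- basic positivity facts
  have ht_nonneg : ∀ i, i ≤ d → 0 ≤ t i := by
    intro i hi
    induction i with
    | zero => simp [ht0]
    | succ n ih =>
      have hn : n < d := hi
      exact le_of_lt (lt_of_le_of_lt (ih (le_of_lt hn)) (htmono n hn))
  have htpos : ∀ i < d, 0 < t (i + 1) := fun i hi =>
    lt_of_le_of_lt (ht_nonneg i (le_of_lt hi)) (htmono i hi)
  have hν_nonneg : ∀ i, i ≤ d → 0 ≤ ν i := by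
    intro i hi
    rcases lt_or_eq_of_le hi with h | h
    · exact le_of_lt (hνpos i h)
    · rw [h, hνd]
  have ht1 : 0 < t 1 := htpos 0 hd
  have hν0 : 0 < ν 0 := hνpos 0 hd
  set S := ∑ i ∈ Finset.range d, Real.sqrt (ν i) * (Real.sqrt (t (i + 1)) - Real.sqrt (t i))
    with hSdef
  have hS : 0 ≤ S := by
    apply Finset.sum_nonneg
    intro i hi
    rw [Finset.mem_range] at hi
    exact mul_nonneg (Real.sqrt_nonneg _)
      (sub_nonneg.2 (Real.sqrt_le_sqrt (le_of_lt (htmono i hi))))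
  set U := ∑ i ∈ Finset.range d, Real.sqrt (ν i) / Real.sqrt (t (i + 1)) * (t (i + 1) - t i)
    with hUdef
  set V := ∑ i ∈ Finset.range d, Real.sqrt (t (i + 1)) / Real.sqrt (ν i) * (ν i - ν (i + 1))
    with hVdef
  -- rewrite q on range d
  have hqform : ∀ i < d, q i =
      Real.sqrt (t 1) * Real.sqrt (ν i) / (Real.sqrt (ν 0) * Real.sqrt (t (i + 1))) := by
    intro i hi
    rw [hq i hi, Real.sqrt_div (mul_nonneg ht1.le (hνpos i hi).le),
      Real.sqrt_mul (le_of_lt ht1), Real.sqrt_mul (le_of_lt hν0)]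
  -- the two sums factor
  have hA : (∑ i ∈ Finset.range d, q i * (t (i + 1) - t i)) =
      Real.sqrt (t 1) / Real.sqrt (ν 0) * U := by
    rw [hUdef, Finset.mul_sum]
    apply Finset.sum_congr rfl
    intro i hi
    rw [Finset.mem_range] at hi
    rw [hqform i hi]
    have h1 : (0:ℝ) < Real.sqrt (t (i + 1)) := Real.sqrt_pos.2 (htpos i hi)
    have h2 : (0:ℝ) < Real.sqrt (ν 0) := Real.sqrt_pos.2 hν0
    field_simp
  have hB : (∑ i ∈ Finset.range d, (ν i - ν (i + 1)) / q i) =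
      Real.sqrt (ν 0) / Real.sqrt (t 1) * V := by
    rw [hVdef, Finset.mul_sum]
    apply Finset.sum_congr rfl
    intro i hi
    rw [Finset.mem_range] at hi
    rw [hqform i hi]
    have h1 : (0:ℝ) < Real.sqrt (t (i + 1)) := Real.sqrt_pos.2 (htpos i hi)
    have h2 : (0:ℝ) < Real.sqrt (ν 0) := Real.sqrt_pos.2 hν0
    have h3 : (0:ℝ) < Real.sqrt (ν i) := Real.sqrt_pos.2 (hνpos i hi)
    have h4 : (0:ℝ) < Real.sqrt (t 1) := Real.sqrt_pos.2 ht1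
    field_simp
  have hprod : (∑ i ∈ Finset.range d, q i * (t (i + 1) - t i)) *
      (∑ i ∈ Finset.range d, (ν i - ν (i + 1)) / q i) = U * V := by
    rw [hA, hB]
    have h2 : (0:ℝ) < Real.sqrt (ν 0) := Real.sqrt_pos.2 hν0
    have h4 : (0:ℝ) < Real.sqrt (t 1) := Real.sqrt_pos.2 ht1
    field_simp
  -- U is nonnegative
  have hU0 : 0 ≤ U := by
    apply Finset.sum_nonneg
    intro i hi
    rw [Finset.mem_range] at hi
    have := le_of_lt (htmono i hi)
    have h1 : (0:ℝ) ≤ Real.sqrt (ν i) := Real.sqrt_nonneg _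
    have h2 : (0:ℝ) ≤ Real.sqrt (t (i + 1)) := Real.sqrt_nonneg _
    have : 0 ≤ t (i + 1) - t i := by linarith
    positivity
  -- U ≤ 2S (termwise)
  have hU : U ≤ 2 * S := by
    rw [hUdef, hSdef, Finset.mul_sum]
    apply Finset.sum_le_sum
    intro i hi
    rw [Finset.mem_range] at hi
    set a := Real.sqrt (t i) with ha
    set b := Real.sqrt (t (i + 1)) with hb
    set n := Real.sqrt (ν i) with hn
    have hbpos : 0 < b := Real.sqrt_pos.2 (htpos i hi)
    have ha0 : 0 ≤ a := Real.sqrt_nonneg _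
    have hn0 : 0 ≤ n := Real.sqrt_nonneg _
    have hab : a ≤ b := Real.sqrt_le_sqrt (le_of_lt (htmono i hi))
    have hta : t i = a ^ 2 := (Real.sq_sqrt (ht_nonneg i (le_of_lt hi))).symm
    have htb : t (i + 1) = b ^ 2 := (Real.sq_sqrt (ht_nonneg (i + 1) hi)).symm
    rw [hta, htb, div_mul_eq_mul_div, div_le_iff₀ hbpos]
    nlinarith [mul_nonneg hn0 (sq_nonneg (b - a))]
  -- V ≤ 2S : termwise bound plus telescoping
  have hVle : V ≤ ∑ i ∈ Finset.range d,
      2 * Real.sqrt (t (i + 1)) * (Real.sqrt (ν i) - Real.sqrt (ν (i + 1))) := by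
    rw [hVdef]
    apply Finset.sum_le_sum
    intro i hi
    rw [Finset.mem_range] at hi
    set b := Real.sqrt (t (i + 1)) with hb
    set m := Real.sqrt (ν i) with hm
    set m' := Real.sqrt (ν (i + 1)) with hm'
    have hb0 : 0 ≤ b := Real.sqrt_nonneg _
    have hmpos : 0 < m := Real.sqrt_pos.2 (hνpos i hi)
    have hm'0 : 0 ≤ m' := Real.sqrt_nonneg _
    have hνa : ν i = m ^ 2 := (Real.sq_sqrt (le_of_lt (hνpos i hi))).symm
    have hνb : ν (i + 1) = m' ^ 2 := (Real.sq_sqrt (hν_nonneg (i + 1) hi)).symm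
    rw [hνa, hνb, div_mul_eq_mul_div, div_le_iff₀ hmpos]
    nlinarith [mul_nonneg hb0 (sq_nonneg (m - m'))]
  have htele : ∑ i ∈ Finset.range d,
      2 * Real.sqrt (t (i + 1)) * (Real.sqrt (ν i) - Real.sqrt (ν (i + 1))) = 2 * S := by
    have hsplit : ∀ i ∈ Finset.range d,
        2 * Real.sqrt (t (i + 1)) * (Real.sqrt (ν i) - Real.sqrt (ν (i + 1))) =
        2 * (Real.sqrt (ν i) * (Real.sqrt (t (i + 1)) - Real.sqrt (t i))) +
        2 * (Real.sqrt (ν i) * Real.sqrt (t i) -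
          Real.sqrt (ν (i + 1)) * Real.sqrt (t (i + 1))) := by
      intro i _; ring
    rw [Finset.sum_congr rfl hsplit, Finset.sum_add_distrib, ← Finset.mul_sum, ← Finset.mul_sum,
      Finset.sum_range_sub' (fun i => Real.sqrt (ν i) * Real.sqrt (t i))]
    rw [ht0, hνd]
    simp [hSdef]
  have hV : V ≤ 2 * S := by rw [← htele]; exact hVle
  -- conclude
  rw [hprod]
  calc U * V ≤ U * (2 * S) := mul_le_mul_of_nonneg_left hV hU0
    _ ≤ (2 * S) * (2 * S) := mul_le_mul_of_nonneg_right hU (by linarith)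
    _ = 4 * S ^ 2 := by ring
end

section
/- Let 0 = t_0 < t_1 < ... < t_d, and let C(0) ≥ C(1) ≥ ... ≥ C(d) = 0 be a decreasing sequence of nonnegative reals. For any q with 1 = q_0 ≥ q_1 ≥ ... ≥ q_{d-1} > 0, (Σ_{i=0}^{d-1} (C(i) - C(i+1))/q_i) · (Σ_{j=0}^{d-1} q_j (t_{j+1} - t_j)) ≥ Σ_{i=0}^{d-1} C(i) (t_{i+1} - t_i). -/
lemma abel_aux (t C : ℕ → ℝ) (n : ℕ) :
    ∑ i ∈ Finset.range n, (C i - C (i + 1)) * t (i + 1) =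
      ∑ i ∈ Finset.range n, C i * (t (i + 1) - t i) - C n * t n + C 0 * t 0 := by
  induction n with
  | zero => simp
  | succ n ih =>
    rw [Finset.sum_range_succ, Finset.sum_range_succ, ih]
    ring

theorem stmt_7 (d : ℕ) (hd : 1 ≤ d) (t C q : ℕ → ℝ)
    (ht0 : t 0 = 0) (htmono : ∀ i < d, t i < t (i + 1))
    (hCnonneg : ∀ i ≤ d, 0 ≤ C i) (hCdec : ∀ i < d, C (i + 1) ≤ C i) (hCd : C d = 0)
    (hq0 : q 0 = 1) (hqmono : ∀ i, i + 1 < d → q (i + 1) ≤ q i) (hqpos : 0 < q (d - 1)) :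
    ∑ i ∈ Finset.range d, C i * (t (i + 1) - t i) ≤
      (∑ i ∈ Finset.range d, (C i - C (i + 1)) / q i) *
        (∑ j ∈ Finset.range d, q j * (t (j + 1) - t j)) := by
  set S := ∑ j ∈ Finset.range d, q j * (t (j + 1) - t j) with hS
  have qle : ∀ i j, i ≤ j → j < d → q j ≤ q i := by
    intro i j hij
    induction j, hij using Nat.le_induction with
    | base => intro _; exact le_refl _
    | succ j hij ih =>
      intro hj
      exact le_trans (hqmono j hj) (ih (by omega))
  have qpos : ∀ i < d, 0 < q i := fun i hi =>
    lt_of_lt_of_le hqpos (qle i (d - 1) (by omega) (by omega))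
  -- key: for k < d, q k * t (k+1) ≤ S
  have key : ∀ k < d, q k * t (k + 1) ≤ S := by
    intro k hk
    have h1 : q k * t (k + 1) ≤ ∑ j ∈ Finset.range (k + 1), q j * (t (j + 1) - t j) := by
      have : q k * t (k + 1) = ∑ j ∈ Finset.range (k + 1), q k * (t (j + 1) - t j) := by
        rw [← Finset.mul_sum, Finset.sum_range_sub, ht0, sub_zero]
      rw [this]
      apply Finset.sum_le_sum
      intro j hj
      have hjk : j ≤ k := Nat.lt_succ_iff.mp (Finset.mem_range.mp hj)
      have := qle j k hjk hk
      have ht := htmono j (by omega)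
      nlinarith
    refine h1.trans ?_
    apply Finset.sum_le_sum_of_subset_of_nonneg
    · exact Finset.range_subset_range.mpr (by omega)
    · intro j hj _
      have hjd : j < d := Finset.mem_range.mp hj
      have := qpos j hjd
      have := htmono j hjd
      nlinarith
  have hLHS : ∑ i ∈ Finset.range d, C i * (t (i + 1) - t i) =
      ∑ i ∈ Finset.range d, (C i - C (i + 1)) * t (i + 1) := by
    rw [abel_aux t C d, hCd, ht0]
    ring
  rw [hLHS, Finset.sum_mul]
  apply Finset.sum_le_sum
  intro k hk
  have hkd : k < d := Finset.mem_range.mp hk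
  have hqk := qpos k hkd
  have hD : 0 ≤ C k - C (k + 1) := sub_nonneg.mpr (hCdec k hkd)
  have h1 : t (k + 1) ≤ S / q k := (le_div_iff₀ hqk).mpr (by rw [mul_comm]; exact key k hkd)
  calc (C k - C (k + 1)) * t (k + 1) ≤ (C k - C (k + 1)) * (S / q k) :=
        mul_le_mul_of_nonneg_left h1 hD
    _ = (C k - C (k + 1)) / q k * S := by ring
end

section
/- Let 0 = t_0 < t_1 < ... < t_d with t_1 > 0, and let C(0) ≥ ... ≥ C(d) = 0 be decreasing nonnegative reals. If q_i = t_1/t_{i+1} for 0 ≤ i ≤ d-1, then (Σ_{i=0}^{d-1} q_i (t_{i+1} - t_i)) · (Σ_{i=0}^{d-1} 2(C(i) - C(i+1))/q_i) ≤ 2 (1 + ln(t_d/t_1)) Σ_{i=0}^{d-1} C(i) (t_{i+1} - t_i). -/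
theorem stmt_8 (d : ℕ) (hd : 1 ≤ d) (t C q : ℕ → ℝ)
    (ht0 : t 0 = 0) (ht1 : 0 < t 1) (htmono : ∀ i < d, t i < t (i + 1))
    (hCnonneg : ∀ i ≤ d, 0 ≤ C i) (hCdec : ∀ i < d, C (i + 1) ≤ C i) (hCd : C d = 0)
    (hq : ∀ i < d, q i = t 1 / t (i + 1)) :
    (∑ i ∈ Finset.range d, q i * (t (i + 1) - t i)) *
      (∑ i ∈ Finset.range d, 2 * (C i - C (i + 1)) / q i) ≤
    2 * (1 + Real.log (t d / t 1)) * ∑ i ∈ Finset.range d, C i * (t (i + 1) - t i) := by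
  have ht1ne : t 1 ≠ 0 := ne_of_gt ht1
  -- positivity of t
  have htpos : ∀ i, 1 ≤ i → i ≤ d → 0 < t i := by
    intro i h1 h2
    induction i with
    | zero => omega
    | succ n ih =>
      rcases Nat.lt_or_ge 1 (n + 1) with h | h
      · exact lt_trans (ih (by omega) (by omega)) (htmono n (by omega))
      · have : n = 0 := by omega
        simpa [this] using ht1
  set S := ∑ i ∈ Finset.range d, C i * (t (i + 1) - t i) with hS
  have hSnonneg : 0 ≤ S := by
    apply Finset.sum_nonneg
    intro i hi
    have hi' := Finset.mem_range.mp hi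
    exact mul_nonneg (hCnonneg i (by omega)) (le_of_lt (by linarith [htmono i hi']))
  -- first sum
  have hA : (∑ i ∈ Finset.range d, q i * (t (i + 1) - t i)) =
      t 1 * ∑ i ∈ Finset.range d, (t (i + 1) - t i) / t (i + 1) := by
    rw [Finset.mul_sum]
    apply Finset.sum_congr rfl
    intro i hi
    have hi' := Finset.mem_range.mp hi
    rw [hq i hi']
    have : t (i + 1) ≠ 0 := ne_of_gt (htpos (i + 1) (by omega) (by omega))
    field_simp
  -- bound the inner sum
  have hlog : ∀ i, 1 ≤ i → i < d →
      (t (i + 1) - t i) / t (i + 1) ≤ Real.log (t (i + 1)) - Real.log (t i) := by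
    intro i h1 h2
    have hpi : 0 < t i := htpos i h1 (by omega)
    have hpi1 : 0 < t (i + 1) := htpos (i + 1) (by omega) (by omega)
    have hlt := htmono i h2
    have h3 : Real.log (t i / t (i + 1)) ≤ t i / t (i + 1) - 1 :=
      Real.log_le_sub_one_of_pos (div_pos hpi hpi1)
    rw [Real.log_div (ne_of_gt hpi) (ne_of_gt hpi1)] at h3
    have h4 : (t (i + 1) - t i) / t (i + 1) = 1 - t i / t (i + 1) := by
      field_simp
    linarith
  have htele : ∑ i ∈ Finset.Ico 1 d, (Real.log (t (i + 1)) - Real.log (t i)) =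
      Real.log (t d) - Real.log (t 1) := by
    have h1 : ∑ i ∈ Finset.range d, (Real.log (t (i + 1)) - Real.log (t i)) =
        Real.log (t d) - Real.log (t 0) := Finset.sum_range_sub (fun i => Real.log (t i)) d
    have h2 : ∑ i ∈ Finset.range d, (Real.log (t (i + 1)) - Real.log (t i)) =
        (Real.log (t 1) - Real.log (t 0)) +
        ∑ i ∈ Finset.Ico 1 d, (Real.log (t (i + 1)) - Real.log (t i)) := by
      rw [Finset.range_eq_Ico, Finset.sum_eq_sum_Ico_succ_bot (by omega)]
    linarith
  have hinner : ∑ i ∈ Finset.range d, (t (i + 1) - t i) / t (i + 1) ≤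
      1 + (Real.log (t d) - Real.log (t 1)) := by
    rw [Finset.range_eq_Ico, Finset.sum_eq_sum_Ico_succ_bot (by omega : (0:ℕ) < d)]
    have h0 : (t (0 + 1) - t 0) / t (0 + 1) = 1 := by
      simp [ht0, div_self ht1ne]
    rw [h0, ← htele]
    have : ∑ i ∈ Finset.Ico 1 d, (t (i + 1) - t i) / t (i + 1) ≤
        ∑ i ∈ Finset.Ico 1 d, (Real.log (t (i + 1)) - Real.log (t i)) := by
      apply Finset.sum_le_sum
      intro i hi
      obtain ⟨h1, h2⟩ := Finset.mem_Ico.mp hi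
      exact hlog i h1 h2
    linarith
  have hAbound : (∑ i ∈ Finset.range d, q i * (t (i + 1) - t i)) ≤
      t 1 * (1 + (Real.log (t d) - Real.log (t 1))) := by
    rw [hA]
    exact mul_le_mul_of_nonneg_left hinner (le_of_lt ht1)
  -- second sum
  have hB : (∑ i ∈ Finset.range d, 2 * (C i - C (i + 1)) / q i) = (2 / t 1) * S := by
    have habel : ∑ i ∈ Finset.range d, (C i - C (i + 1)) * t (i + 1) = S := by
      have tele := Finset.sum_range_sub (fun i => C i * t i) d
      have key : ∑ i ∈ Finset.range d, ((C i - C (i + 1)) * t (i + 1) - C i * (t (i + 1) - t i))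
          = ∑ i ∈ Finset.range d, (C i * t i - C (i + 1) * t (i + 1)) := by
        apply Finset.sum_congr rfl
        intro i _
        ring
      rw [Finset.sum_sub_distrib] at key
      have key2 : ∑ i ∈ Finset.range d, (C i * t i - C (i + 1) * t (i + 1)) =
          -(C d * t d - C 0 * t 0) := by
        rw [← tele, ← Finset.sum_neg_distrib]
        apply Finset.sum_congr rfl
        intro i _
        ring
      rw [key2, hCd, ht0] at key
      simp at key
      linarith [key]
    rw [← habel, Finset.mul_sum]
    apply Finset.sum_congr rfl
    intro i hi
    have hi' := Finset.mem_range.mp hi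
    rw [hq i hi']
    have hne : t (i + 1) ≠ 0 := ne_of_gt (htpos (i + 1) (by omega) (by omega))
    field_simp
  have hBnonneg : 0 ≤ (2 / t 1) * S := by positivity
  have hfinal : (∑ i ∈ Finset.range d, q i * (t (i + 1) - t i)) *
      (∑ i ∈ Finset.range d, 2 * (C i - C (i + 1)) / q i) ≤
      (t 1 * (1 + (Real.log (t d) - Real.log (t 1)))) * ((2 / t 1) * S) := by
    rw [hB]
    exact mul_le_mul_of_nonneg_right hAbound hBnonneg
  have hlogdiv : Real.log (t d / t 1) = Real.log (t d) - Real.log (t 1) :=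
    Real.log_div (ne_of_gt (htpos d hd le_rfl)) ht1ne
  calc _ ≤ (t 1 * (1 + (Real.log (t d) - Real.log (t 1)))) * ((2 / t 1) * S) := hfinal
    _ = 2 * (1 + Real.log (t d / t 1)) * S := by rw [hlogdiv]; field_simp
end

section
/- Let (X_m), 0 ≤ m ≤ d, be a Markov chain defined by X_{i+1} = g_i(X_i, Y_i) where Y_0,...,Y_{d-1} are independent random variables independent of X_0, and g_i are measurable. Let g be measurable with g(X_d) square-integrable. Setting U_i = Y_{d-i} so that g(X_d) = f(U_1,...,U_d), for 0 ≤ i ≤ d one has C(i) := Var(E[g(X_d) | U_{i+1},...,U_d]) = Var(E[g(X_d) | X_{d-i}]). -/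
open MeasureTheory ProbabilityTheory

namespace Stmt13Aux

variable {Ω F F' : Type*}

/-- Apply steps `n, n+1, …, n+m-1` to `x`, driven by `y`. -/
def iter (step : ℕ → F' → F → F') (y : ℕ → F) : ℕ → ℕ → F' → F'
  | _, 0, x => x
  | n, m+1, x => iter step y (n+1) m (step n x (y n))

lemma measurable_iter [MeasurableSpace F] [MeasurableSpace F'] {E : Type*} [MeasurableSpace E]
    (step : ℕ → F' → F → F') (hstep : ∀ i, Measurable (fun p : F' × F => step i p.1 p.2))
    (c : E → ℕ → F) (hc : ∀ n, Measurable fun e => c e n) (m n : ℕ) :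
    Measurable (fun p : F' × E => iter step (c p.2) n m p.1) := by
  induction m generalizing n with
  | zero => exact measurable_fst
  | succ m ih =>
      have : (fun p : F' × E => iter step (c p.2) n (m+1) p.1)
          = (fun p : F' × E => iter step (c p.2) (n+1) m p.1) ∘
            (fun p : F' × E => (step n p.1 (c p.2 n), p.2)) := rfl
      rw [this]
      exact (ih (n+1)).comp
        (((hstep n).comp (measurable_fst.prodMk ((hc n).comp measurable_snd))).prodMk
          measurable_snd)

lemma variance_congr {mΩ : MeasurableSpace Ω} {μ : Measure Ω} {f g : Ω → ℝ}
    (h : f =ᵐ[μ] g) : variance f μ = variance g μ := by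
  unfold ProbabilityTheory.variance ProbabilityTheory.evariance
  rw [integral_congr_ae h]
  congr 1
  apply lintegral_congr_ae
  filter_upwards [h] with ω hω
  rw [hω]



/-- Freezing lemma: if `Z` is `m`-measurable and `W` is independent of `m`, then
`E[h(Z,W) | m] = φ ∘ Z` where `φ x = ∫ h(x,w) dμ_W`. -/
lemma condexp_freeze {Ω F' E : Type*} {m : MeasurableSpace Ω} [mΩ : MeasurableSpace Ω]
    [mF' : MeasurableSpace F'] [mE : MeasurableSpace E]
    (μ : Measure Ω) [IsProbabilityMeasure μ]
    (hm : m ≤ mΩ)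
    {Z : Ω → F'} (hZm : Measurable[m] Z)
    {W : Ω → E} (hW : Measurable W)
    (hindep : Indep m (MeasurableSpace.comap W mE) μ)
    {h : F' × E → ℝ} (hh : Measurable h)
    (hint : Integrable (fun ω => h (Z ω, W ω)) μ) :
    μ[(fun ω => h (Z ω, W ω)) | m] =ᵐ[μ] fun ω => ∫ w, h (Z ω, w) ∂(μ.map W) := by
  have hZ : Measurable Z := hZm.mono hm le_rfl
  set ν : Measure E := μ.map W with hν
  have : IsProbabilityMeasure ν := Measure.isProbabilityMeasure_map hW.aemeasurable
  set φ : F' → ℝ := fun x => ∫ w, h (x, w) ∂ν with hφ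
  have hφsm : StronglyMeasurable φ := hh.stronglyMeasurable.integral_prod_right'
  -- the pair (Z, W) has law (μ.map Z) ⊗ ν
  have hZW : IndepFun Z W μ :=
    indep_of_indep_of_le_left hindep (measurable_iff_comap_le.mp hZm)
  have hprod : μ.map (fun ω => (Z ω, W ω)) = (μ.map Z).prod ν :=
    (indepFun_iff_map_prod_eq_prod_map_map hZ.aemeasurable hW.aemeasurable).mp hZW
  -- integrability of φ ∘ Z
  have hint_prod : Integrable h ((μ.map Z).prod ν) := by
    rw [← hprod]
    exact (integrable_map_measure hh.aestronglyMeasurable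
      (hZ.prodMk hW).aemeasurable).mpr hint
  have hφZint : Integrable (fun ω => φ (Z ω)) μ := by
    have h1 : Integrable φ (μ.map Z) := hint_prod.integral_prod_left
    exact (integrable_map_measure hφsm.aestronglyMeasurable hZ.aemeasurable).mp h1
  symm
  refine (ae_eq_condExp_of_forall_setIntegral_eq hm hint
    (fun s _ _ => hφZint.integrableOn) (fun s hs _ => ?_)
    (StronglyMeasurable.aestronglyMeasurable (hφsm.comp_measurable hZm)))
  -- key set-integral computation via the pair ((1_s, Z), W)
  set ξ : Ω → ℝ × F' := fun ω => (s.indicator (fun _ => (1:ℝ)) ω, Z ω) with hξdef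
  have hξm : Measurable[m] ξ := (measurable_const.indicator hs).prodMk hZm
  have hξ : Measurable ξ := hξm.mono hm le_rfl
  have hξW : IndepFun ξ W μ := indep_of_indep_of_le_left hindep (measurable_iff_comap_le.mp hξm)
  have hprod2 : μ.map (fun ω => (ξ ω, W ω)) = (μ.map ξ).prod ν :=
    (indepFun_iff_map_prod_eq_prod_map_map hξ.aemeasurable hW.aemeasurable).mp hξW
  set G : (ℝ × F') × E → ℝ := fun p => p.1.1 * h (p.1.2, p.2) with hGdef
  have hG : Measurable G :=
    (measurable_fst.fst).mul (hh.comp ((measurable_fst.snd).prodMk measurable_snd))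
  have hGint0 : Integrable (fun ω => G (ξ ω, W ω)) μ := by
    have : (fun ω => G (ξ ω, W ω)) = s.indicator (fun ω => h (Z ω, W ω)) := by
      funext ω
      by_cases hω : ω ∈ s <;> simp [hGdef, hξdef, Set.indicator_of_mem, Set.indicator_of_notMem, hω]
    rw [this]
    exact hint.indicator (hm s hs)
  have hGint : Integrable G ((μ.map ξ).prod ν) := by
    rw [← hprod2]
    exact (integrable_map_measure hG.aestronglyMeasurable
      (hξ.prodMk hW).aemeasurable).mpr hGint0
  calc ∫ x in s, φ (Z x) ∂μ
      = ∫ ω, s.indicator (fun ω => φ (Z ω)) ω ∂μ := (integral_indicator (hm s hs)).symm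
    _ = ∫ ω, (ξ ω).1 * φ ((ξ ω).2) ∂μ := by
        congr 1; funext ω
        by_cases hω : ω ∈ s <;>
          simp [hξdef, Set.indicator_of_mem, Set.indicator_of_notMem, hω]
    _ = ∫ p : ℝ × F', p.1 * φ p.2 ∂(μ.map ξ) :=
        (integral_map hξ.aemeasurable
          ((measurable_fst.mul (hφsm.measurable.comp measurable_snd)).aestronglyMeasurable)).symm
    _ = ∫ p : ℝ × F', ∫ w, G (p, w) ∂ν ∂(μ.map ξ) := by
        congr 1; funext p
        simp only [hGdef, hφ]
        rw [integral_const_mul]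
    _ = ∫ q, G q ∂((μ.map ξ).prod ν) := (integral_prod G hGint).symm
    _ = ∫ ω, G (ξ ω, W ω) ∂μ := by
        rw [← hprod2, integral_map (hξ.prodMk hW).aemeasurable hG.aestronglyMeasurable]
    _ = ∫ ω, s.indicator (fun ω => h (Z ω, W ω)) ω ∂μ := by
        congr 1; funext ω
        by_cases hω : ω ∈ s <;>
          simp [hGdef, hξdef, Set.indicator_of_mem, Set.indicator_of_notMem, hω]
    _ = ∫ x in s, h (Z x, W x) ∂μ := integral_indicator (hm s hs)


lemma measurable_pi_of {Ω F ι : Type*} (m : MeasurableSpace Ω) [mF : MeasurableSpace F]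
    (Y : ι → Ω → F) (hY : ∀ j, Measurable[m] (Y j)) :
    Measurable[m] (fun ω (j : ι) => Y j ω) := by
  letI := m
  exact measurable_pi_lambda _ hY

end Stmt13Aux

open Stmt13Aux

/-- for a Markov chain `X_{i+1} = g_i (X_i, Y_i)` driven by
independent random variables `Y_0, …, Y_{d-1}`, setting `U_k = Y_{d-k}` one has
`C i = Var(E[g(X_d) | U_{i+1}, …, U_d]) = Var(E[g(X_d) | X_{d-i}])`.
Since `{U_{i+1}, …, U_d} = {Y_j : j < d - i}`, the first σ-algebra is the one
generated by the `Y j` with `(j : ℕ) < d - i`. -/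
theorem stmt_13 {Ω F F' : Type*} [MeasurableSpace Ω]
    [mF : MeasurableSpace F] [mF' : MeasurableSpace F']
    (μ : Measure Ω) [IsProbabilityMeasure μ]
    (d : ℕ) (x0 : F') (Y : Fin d → Ω → F)
    (hYmeas : ∀ j, Measurable (Y j))
    (hYindep : iIndepFun Y μ)
    (step : ℕ → F' → F → F')
    (hstep : ∀ i, Measurable (fun p : F' × F => step i p.1 p.2))
    (X : ℕ → Ω → F')
    (hX0 : X 0 = fun _ => x0)
    (hXrec : ∀ i : Fin d, X ((i : ℕ) + 1) = fun ω => step i (X i ω) (Y i ω))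
    (g : F' → ℝ) (hg : Measurable g)
    (hgL2 : MemLp (fun ω => g (X d ω)) 2 μ) :
    ∀ i ≤ d,
      variance
        (μ[(fun ω => g (X d ω)) |
          ⨆ j : {j : Fin d // (j : ℕ) < d - i}, MeasurableSpace.comap (Y j) mF]) μ =
      variance
        (μ[(fun ω => g (X d ω)) | MeasurableSpace.comap (X (d - i)) mF']) μ := by
  rename_i mΩ _hprob
  intro i hi
  set k := d - i with hk
  have hkd : k ≤ d := Nat.sub_le d i
  set f : Ω → ℝ := fun ω => g (X d ω) with hfdef
  have hfint : Integrable f μ := hgL2.integrable one_le_two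
  -- ambient measurability of X n
  have hXmeas : ∀ n, n ≤ d → Measurable (X n) := by
    intro n
    induction n with
    | zero => intro _; rw [hX0]; exact measurable_const
    | succ n ih =>
        intro hn
        have hnd : n < d := hn
        have h1 : X (n+1) = fun ω => step n (X n ω) (Y ⟨n, hnd⟩ ω) := hXrec ⟨n, hnd⟩
        rw [h1]
        exact (hstep n).comp ((ih hnd.le).prodMk (hYmeas ⟨n, hnd⟩))
  set m1 : MeasurableSpace Ω :=
    ⨆ j : {j : Fin d // (j : ℕ) < k}, MeasurableSpace.comap (Y j) mF with hm1def
  letI _inst : MeasurableSpace Ω := mΩ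
  have hm1 : m1 ≤ mΩ := iSup_le fun j => (hYmeas j).comap_le
  have hYm1 : ∀ j : Fin d, (hj : (j : ℕ) < k) → Measurable[m1] (Y j) := fun j hj =>
    measurable_iff_comap_le.mpr
      (le_iSup (fun j : {j : Fin d // (j : ℕ) < k} => MeasurableSpace.comap (Y j) mF) ⟨j, hj⟩)
  have hXm1 : ∀ n, n ≤ k → Measurable[m1] (X n) := by
    intro n
    induction n with
    | zero => intro _; rw [hX0]; exact measurable_const
    | succ n ih =>
        intro hn
        have hnd : n < d := lt_of_lt_of_le hn hkd
        have h1 : X (n+1) = fun ω => step n (X n ω) (Y ⟨n, hnd⟩ ω) := hXrec ⟨n, hnd⟩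
        rw [h1]
        exact (hstep n).comp ((ih (Nat.le_of_succ_le hn)).prodMk (hYm1 ⟨n, hnd⟩ hn))
  rcases eq_or_lt_of_le hkd with hkeq | hklt
  · -- k = d : both conditional expectations equal f
    have h1 : μ[f|m1] = f := by
      refine condExp_of_stronglyMeasurable hm1 ?_ hfint
      exact (hg.comp (hXm1 d hkeq.ge)).stronglyMeasurable
    have h2 : μ[f|MeasurableSpace.comap (X k) mF'] = f := by
      rw [hkeq]
      refine condExp_of_stronglyMeasurable (hXmeas d le_rfl).comap_le ?_ hfint
      exact (hg.comp (measurable_iff_comap_le.mpr le_rfl)).stronglyMeasurable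
    rw [h1, hkeq] at *
    rw [h2]
  · -- k < d : use the freezing lemma for both σ-algebras
    set E := ({j : Fin d // k ≤ (j : ℕ)} → F) with hEdef
    set W : Ω → E := fun ω j => Y j ω with hWdef
    have hW : Measurable[mΩ] W := by
      rw [hWdef]
      exact measurable_pi_of mΩ (fun j : {j : Fin d // k ≤ (j : ℕ)} => Y j)
        (fun j => hYmeas j)
    set j0 : {j : Fin d // k ≤ (j : ℕ)} := ⟨⟨k, hklt⟩, le_rfl⟩ with hj0def
    set ext : E → ℕ → F :=
      fun w n => if hn : n < d ∧ k ≤ n then w ⟨⟨n, hn.1⟩, hn.2⟩ else w j0 with hextdef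
    have hext : ∀ n, Measurable fun w : E => ext w n := by
      intro n
      by_cases hn : n < d ∧ k ≤ n
      · simp only [hextdef, hn, dif_pos]
        exact measurable_pi_apply _
      · simp only [hextdef, hn, dif_neg, not_false_iff]
        exact measurable_pi_apply _
    set h : F' × E → ℝ := fun p => g (iter step (ext p.2) k (d - k) p.1) with hhdef
    have hh : Measurable h := hg.comp (measurable_iter step hstep ext hext (d - k) k)
    -- pointwise identity f = h (X k, W)
    have claim : ∀ m n, k ≤ n → n + m ≤ d → ∀ ω,
        X (n + m) ω = iter step (ext (W ω)) n m (X n ω) := by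
      intro m
      induction m with
      | zero => intro n _ _ ω; rfl
      | succ m ih =>
          intro n hkn hnd ω
          have hnd' : n < d := by omega
          calc X (n + (m+1)) ω = X ((n+1) + m) ω := by rw [show n + (m+1) = (n+1) + m by omega]
            _ = iter step (ext (W ω)) (n+1) m (X (n+1) ω) := ih (n+1) (by omega) (by omega) ω
            _ = iter step (ext (W ω)) (n+1) m (step n (X n ω) (ext (W ω) n)) := by
                have hx : X (n+1) ω = step n (X n ω) (Y ⟨n, hnd'⟩ ω) :=
                  congrFun (hXrec ⟨n, hnd'⟩) ω
                have he : ext (W ω) n = Y ⟨n, hnd'⟩ ω := by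
                  simp only [hextdef, hWdef]
                  rw [dif_pos ⟨hnd', hkn⟩]
                rw [hx, he]
            _ = iter step (ext (W ω)) n (m+1) (X n ω) := rfl
    have hfeq : ∀ ω, f ω = h (X k ω, W ω) := by
      intro ω
      have h1 := claim (d - k) k le_rfl (by omega) ω
      rw [show k + (d - k) = d by omega] at h1
      simp only [hfdef, hhdef, h1]
    -- independence of m1 and σ(W)
    have hind : Indep m1 (MeasurableSpace.comap W (by infer_instance)) μ := by
      have hbig : Indep (⨆ j ∈ {j : Fin d | (j : ℕ) < k}, MeasurableSpace.comap (Y j) mF)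
          (⨆ j ∈ {j : Fin d | (j : ℕ) < k}ᶜ, MeasurableSpace.comap (Y j) mF) μ :=
        indep_iSup_of_disjoint (fun j => (hYmeas j).comap_le) hYindep disjoint_compl_right
      refine indep_of_indep_of_le_right (indep_of_indep_of_le_left hbig ?_) ?_
      · refine iSup_le ?_
        rintro ⟨j, hj⟩
        exact le_iSup₂ (f := fun (j : Fin d) (_ : (j : ℕ) < k) => MeasurableSpace.comap (Y j) mF)
          j hj
      · refine measurable_iff_comap_le.mp ?_
        rw [hWdef]
        refine measurable_pi_of _ (fun j : {j : Fin d // k ≤ (j : ℕ)} => Y j) ?_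
        rintro ⟨j, hj⟩
        refine measurable_iff_comap_le.mpr ?_
        exact le_iSup₂ (f := fun (j : Fin d) (_ : j ∈ {j : Fin d | (j : ℕ) < k}ᶜ) =>
          MeasurableSpace.comap (Y j) mF) j (by simpa using not_lt.mpr hj)
    have hfint' : Integrable (fun ω => h (X k ω, W ω)) μ := by
      have : (fun ω => h (X k ω, W ω)) = f := by funext ω; exact (hfeq ω).symm
      rw [this]; exact hfint
    have hXkZ : Measurable[MeasurableSpace.comap (X k) mF'] (X k) :=
      measurable_iff_comap_le.mpr le_rfl
    have hc1 : μ[f|m1] =ᵐ[μ] fun ω => ∫ w, h (X k ω, w) ∂(μ.map W) := by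
      have h0 := condexp_freeze μ hm1 (hXm1 k le_rfl) hW hind hh hfint'
      have he : (fun ω => h (X k ω, W ω)) = f := by funext ω; exact (hfeq ω).symm
      rwa [he] at h0
    have hc2 : μ[f|MeasurableSpace.comap (X k) mF'] =ᵐ[μ]
        fun ω => ∫ w, h (X k ω, w) ∂(μ.map W) := by
      have hind2 : Indep (MeasurableSpace.comap (X k) mF')
          (MeasurableSpace.comap W (by infer_instance)) μ :=
        indep_of_indep_of_le_left hind (measurable_iff_comap_le.mp (hXm1 k le_rfl))
      have h0 := condexp_freeze μ (hXmeas k hkd).comap_le hXkZ hW hind2 hh hfint'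
      have he : (fun ω => h (X k ω, W ω)) = f := by funext ω; exact (hfeq ω).symm
      rwa [he] at h0
    exact Stmt13Aux.variance_congr (hc1.trans hc2.symm)
end

section
/- Let 0 = t_0 < t_1 < ... < t_d with t_i ≤ c·i, let 0 = m_0 < m_1 < ... < m_L = d be integers, and let (ν_i), 0 ≤ i ≤ d, be a decreasing sequence of nonnegative reals with ν_d = 0 such that ν_{m_l} ≤ Var(φ_L - φ_l) for each l. Then Σ_{i=0}^{d-1} sqrt(ν_i/(i+1)) ≤ 2 Σ_{l=1}^{L} sqrt(m_l · V_l), where V_l = Var(φ_l - φ_{l-1}) and φ_0 = 0, and the φ_l are square-integrable random variables with φ_L given. -/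
open MeasureTheory ProbabilityTheory
open scoped ENNReal NNReal

lemma my_evariance_eq {Ω : Type*} [MeasurableSpace Ω] (X : Ω → ℝ) (μ : Measure Ω) :
    evariance X μ = (eLpNorm (fun ω => X ω - μ[X]) 2 μ) ^ 2 := by
  rw [eLpNorm_eq_lintegral_rpow_enorm_toReal two_ne_zero ENNReal.ofNat_ne_top]
  rw [evariance]
  rw [← ENNReal.rpow_natCast _ 2, ← ENNReal.rpow_mul]
  norm_num

lemma my_sqrt_var {Ω : Type*} [MeasurableSpace Ω] (X : Ω → ℝ) (μ : Measure Ω) :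
    Real.sqrt (variance X μ) = (eLpNorm (fun ω => X ω - μ[X]) 2 μ).toReal := by
  rw [variance, my_evariance_eq, ENNReal.toReal_pow]
  exact Real.sqrt_sq ENNReal.toReal_nonneg

lemma my_std_add {Ω : Type*} [MeasurableSpace Ω] {μ : Measure Ω} [IsProbabilityMeasure μ]
    {X Y : Ω → ℝ} (hX : MemLp X 2 μ) (hY : MemLp Y 2 μ) :
    Real.sqrt (variance (fun ω => X ω + Y ω) μ) ≤
      Real.sqrt (variance X μ) + Real.sqrt (variance Y μ) := by
  have hXi : Integrable X μ := hX.integrable (by norm_num)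
  have hYi : Integrable Y μ := hY.integrable (by norm_num)
  rw [my_sqrt_var, my_sqrt_var, my_sqrt_var]
  have hmean : μ[fun ω => X ω + Y ω] = μ[X] + μ[Y] := integral_add hXi hYi
  have hXc : MemLp (fun ω => X ω - μ[X]) 2 μ := hX.sub (memLp_const _)
  have hYc : MemLp (fun ω => Y ω - μ[Y]) 2 μ := hY.sub (memLp_const _)
  have heq : (fun ω => (X ω + Y ω) - μ[fun ω => X ω + Y ω]) =
      (fun ω => X ω - μ[X]) + (fun ω => Y ω - μ[Y]) := by
    funext ω; simp [hmean]; ring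
  rw [heq]
  have htri := eLpNorm_add_le hXc.aestronglyMeasurable hYc.aestronglyMeasurable
    (by norm_num : (1:ℝ≥0∞) ≤ 2)
  have h1 : eLpNorm (fun ω => X ω - μ[X]) 2 μ ≠ ⊤ := hXc.2.ne
  have h2 : eLpNorm (fun ω => Y ω - μ[Y]) 2 μ ≠ ⊤ := hYc.2.ne
  calc (eLpNorm ((fun ω => X ω - μ[X]) + fun ω => Y ω - μ[Y]) 2 μ).toReal
      ≤ (eLpNorm (fun ω => X ω - μ[X]) 2 μ + eLpNorm (fun ω => Y ω - μ[Y]) 2 μ).toReal :=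
        ENNReal.toReal_mono (by finiteness) htri
    _ = _ := ENNReal.toReal_add h1 h2

/-- `(i+1)^{-1/2} ≤ 2 (√(i+1) - √i)`. -/
lemma my_inv_sqrt_le (i : ℕ) :
    1 / Real.sqrt (i + 1) ≤ 2 * (Real.sqrt (i + 1) - Real.sqrt i) := by
  have h1 : Real.sqrt (i + 1) * Real.sqrt (i + 1) = (i : ℝ) + 1 :=
    Real.mul_self_sqrt (by positivity)
  have h0 : Real.sqrt i * Real.sqrt i = (i : ℝ) := Real.mul_self_sqrt (by positivity)
  have hp : 0 < Real.sqrt (i + 1) := Real.sqrt_pos.mpr (by positivity)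
  have h0n : 0 ≤ Real.sqrt i := Real.sqrt_nonneg _
  rw [div_le_iff₀ hp]
  nlinarith [sq_nonneg (Real.sqrt (i + 1) - Real.sqrt i)]

/-- the MLMC comparison lemma. -/
theorem stmt_17 {Ω : Type*} [MeasurableSpace Ω] (μ : Measure Ω) [IsProbabilityMeasure μ]
    (d L : ℕ) (hL : 1 ≤ L) (c : ℝ) (t : ℕ → ℝ) (m : ℕ → ℕ)
    (ht0 : t 0 = 0) (htmono : ∀ i < d, t i < t (i + 1)) (htc : ∀ i ≤ d, t i ≤ c * i)
    (hm0 : m 0 = 0) (hmmono : ∀ l < L, m l < m (l + 1)) (hmL : m L = d)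
    (φ : ℕ → Ω → ℝ) (hφ0 : φ 0 = fun _ => 0) (hφL2 : ∀ l ≤ L, MemLp (φ l) 2 μ)
    (ν : ℕ → ℝ) (hνnonneg : ∀ i ≤ d, 0 ≤ ν i) (hνdec : ∀ i < d, ν (i + 1) ≤ ν i)
    (hνd : ν d = 0)
    (hν : ∀ l ≤ L, ν (m l) ≤ variance (fun ω => φ L ω - φ l ω) μ) :
    ∑ i ∈ Finset.range d, Real.sqrt (ν i / (i + 1)) ≤
      2 * ∑ l ∈ Finset.Icc 1 L,
        Real.sqrt ((m l : ℝ) * variance (fun ω => φ l ω - φ (l - 1) ω) μ) := by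
  set σ : ℕ → ℝ := fun k => Real.sqrt (variance (fun ω => φ k ω - φ (k - 1) ω) μ) with hσ
  set S : ℕ → ℝ := fun l => ∑ k ∈ Finset.Icc l L, σ k with hS
  have hσnonneg : ∀ k, 0 ≤ σ k := fun k => Real.sqrt_nonneg _
  have hSnonneg : ∀ l, 0 ≤ S l := fun l => Finset.sum_nonneg fun k _ => hσnonneg k
  -- monotonicity of m
  have hm_mono : ∀ b, b ≤ L → ∀ a, a ≤ b → m a ≤ m b := by
    intro b
    induction b with
    | zero => intro _ a ha; have : a = 0 := by omega
              subst this; exact le_rfl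
    | succ n ih =>
      intro hn a ha
      rcases Nat.lt_succ_iff_lt_or_eq.mp (Nat.lt_succ_of_le ha) with h | h
      · exact le_trans (ih (by omega) a (by omega)) (le_of_lt (hmmono n (by omega)))
      · subst h; exact le_rfl
  -- monotonicity of ν
  have hν_mono : ∀ b, b ≤ d → ∀ a, a ≤ b → ν b ≤ ν a := by
    intro b
    induction b with
    | zero => intro _ a ha; have : a = 0 := by omega
              subst this; exact le_rfl
    | succ n ih =>
      intro hn a ha
      rcases Nat.lt_succ_iff_lt_or_eq.mp (Nat.lt_succ_of_le ha) with h | h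
      · exact le_trans (hνdec n (by omega)) (ih (by omega) a (by omega))
      · subst h; exact le_rfl
  -- telescoping sqrt sums over Ico
  have htel : ∀ a b : ℕ, a ≤ b →
      ∑ i ∈ Finset.Ico a b, (Real.sqrt (i + 1) - Real.sqrt i)
        = Real.sqrt b - Real.sqrt a := by
    intro a b hab
    rw [Finset.sum_Ico_eq_sub _ hab]
    have hb := Finset.sum_range_sub (fun i : ℕ => Real.sqrt i) b
    have ha := Finset.sum_range_sub (fun i : ℕ => Real.sqrt i) a
    simp only [Nat.cast_add, Nat.cast_one] at hb ha ⊢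
    rw [hb, ha]
    simp
  -- std-deviation telescoping bound
  have hstd : ∀ j n, n ≤ L → L - n = j →
      Real.sqrt (variance (fun ω => φ L ω - φ n ω) μ) ≤ ∑ k ∈ Finset.Icc (n + 1) L, σ k := by
    intro j
    induction j with
    | zero =>
      intro n hn hj
      have hnL : n = L := by omega
      subst hnL
      have : (fun ω => φ n ω - φ n ω) = (0 : Ω → ℝ) := by funext ω; simp
      rw [this, variance_zero, Real.sqrt_zero]
      exact Finset.sum_nonneg fun k _ => hσnonneg k
    | succ j ih =>
      intro n hn hj
      have hnL : n < L := by omega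
      have heq : (fun ω => φ L ω - φ n ω)
          = fun ω => (φ L ω - φ (n + 1) ω) + (φ (n + 1) ω - φ n ω) := by
        funext ω; ring
      have hX : MemLp (fun ω => φ L ω - φ (n + 1) ω) 2 μ :=
        (hφL2 L le_rfl).sub (hφL2 (n + 1) (by omega))
      have hY : MemLp (fun ω => φ (n + 1) ω - φ n ω) 2 μ :=
        (hφL2 (n + 1) (by omega)).sub (hφL2 n (by omega))
      have h1 := my_std_add hX hY
      rw [← heq] at h1
      have h2 := ih (n + 1) (by omega) (by omega)
      have hins : Finset.Icc (n + 1) L = insert (n + 1) (Finset.Icc (n + 2) L) := by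
        ext x; simp only [Finset.mem_Icc, Finset.mem_insert]; omega
      rw [hins, Finset.sum_insert (by simp)]
      have hσn : σ (n + 1) = Real.sqrt (variance (fun ω => φ (n + 1) ω - φ n ω) μ) := by
        simp [hσ]
      calc Real.sqrt (variance (fun ω => φ L ω - φ n ω) μ)
          ≤ Real.sqrt (variance (fun ω => φ L ω - φ (n + 1) ω) μ)
            + Real.sqrt (variance (fun ω => φ (n + 1) ω - φ n ω) μ) := h1
        _ ≤ σ (n + 1) + ∑ k ∈ Finset.Icc (n + 2) L, σ k := by
            rw [hσn]; linarith
  -- bound on sqrt(ν (m (l-1)))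
  have hkey : ∀ l, 1 ≤ l → l ≤ L → Real.sqrt (ν (m (l - 1))) ≤ S l := by
    intro l hl1 hlL
    have h1 : ν (m (l - 1)) ≤ variance (fun ω => φ L ω - φ (l - 1) ω) μ :=
      hν (l - 1) (by omega)
    have h2 : Real.sqrt (ν (m (l - 1)))
        ≤ Real.sqrt (variance (fun ω => φ L ω - φ (l - 1) ω) μ) := Real.sqrt_le_sqrt h1
    have h3 := hstd (L - (l - 1)) (l - 1) (by omega) rfl
    have : l - 1 + 1 = l := by omega
    rw [this] at h3
    exact le_trans h2 h3
  -- block bound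
  have hblock : ∀ l, 1 ≤ l → l ≤ L →
      ∑ i ∈ Finset.Ico (m (l - 1)) (m l), Real.sqrt (ν i / (i + 1))
        ≤ (Real.sqrt (m l) - Real.sqrt (m (l - 1))) * (2 * Real.sqrt (ν (m (l - 1)))) := by
    intro l hl1 hlL
    have hmle : m (l - 1) ≤ m l := hm_mono l hlL (l - 1) (by omega)
    have hmld : m l ≤ d := by rw [← hmL]; exact hm_mono L le_rfl l hlL
    calc ∑ i ∈ Finset.Ico (m (l - 1)) (m l), Real.sqrt (ν i / (i + 1))
        ≤ ∑ i ∈ Finset.Ico (m (l - 1)) (m l),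
            (Real.sqrt (i + 1) - Real.sqrt i) * (2 * Real.sqrt (ν (m (l - 1)))) := by
          refine Finset.sum_le_sum fun i hi => ?_
          rw [Finset.mem_Ico] at hi
          have hid : i ≤ d := by omega
          have hνi0 : 0 ≤ ν i := hνnonneg i hid
          have hνi : ν i ≤ ν (m (l - 1)) := hν_mono i hid (m (l - 1)) hi.1
          have hsp : 0 < Real.sqrt ((i : ℝ) + 1) := Real.sqrt_pos.mpr (by positivity)
          have h1 : Real.sqrt (ν i / (i + 1)) = Real.sqrt (ν i) / Real.sqrt ((i : ℝ) + 1) := by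
            rw [Real.sqrt_div hνi0]
          rw [h1]
          have h2 : Real.sqrt (ν i) ≤ Real.sqrt (ν (m (l - 1))) := Real.sqrt_le_sqrt hνi
          have h3 := my_inv_sqrt_le i
          calc Real.sqrt (ν i) / Real.sqrt ((i : ℝ) + 1)
              = Real.sqrt (ν i) * (1 / Real.sqrt ((i : ℝ) + 1)) := by ring
            _ ≤ Real.sqrt (ν (m (l - 1))) * (2 * (Real.sqrt (i + 1) - Real.sqrt i)) := by
                apply mul_le_mul h2 h3 (by positivity) (Real.sqrt_nonneg _)
            _ = (Real.sqrt (i + 1) - Real.sqrt i) * (2 * Real.sqrt (ν (m (l - 1)))) := by ring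
      _ = (Real.sqrt (m l) - Real.sqrt (m (l - 1))) * (2 * Real.sqrt (ν (m (l - 1)))) := by
          rw [← Finset.sum_mul, htel _ _ hmle]
  -- decomposition of the range into blocks
  have hdecomp : ∀ n, n ≤ L →
      ∑ i ∈ Finset.range (m n), Real.sqrt (ν i / (i + 1))
        = ∑ l ∈ Finset.Icc 1 n, ∑ i ∈ Finset.Ico (m (l - 1)) (m l),
            Real.sqrt (ν i / (i + 1)) := by
    intro n
    induction n with
    | zero => intro _; simp [hm0]
    | succ n ih =>
      intro hn
      rw [Finset.sum_Icc_succ_top (by omega : 1 ≤ n + 1), ← ih (by omega)]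
      have hmle : m n ≤ m (n + 1) := le_of_lt (hmmono n (by omega))
      rw [Finset.range_eq_Ico,
        ← Finset.sum_Ico_consecutive _ (Nat.zero_le (m n)) hmle]
      simp
  -- swap and telescope
  have hswap : ∑ l ∈ Finset.Icc 1 L, (Real.sqrt (m l) - Real.sqrt (m (l - 1))) * S l
      = ∑ k ∈ Finset.Icc 1 L, Real.sqrt (m k) * σ k := by
    simp only [hS, Finset.mul_sum]
    rw [Finset.sum_comm' (t' := Finset.Icc 1 L) (s' := fun k => Finset.Icc 1 k)
      (by intro x y; simp only [Finset.mem_Icc]; omega)]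
    refine Finset.sum_congr rfl fun k hk => ?_
    rw [Finset.mem_Icc] at hk
    have htel2 : ∀ n, n ≤ L →
        ∑ l ∈ Finset.Icc 1 n, (Real.sqrt (m l) - Real.sqrt (m (l - 1))) = Real.sqrt (m n) := by
      intro n
      induction n with
      | zero => intro _; simp [hm0]
      | succ n ih =>
        intro hn
        rw [Finset.sum_Icc_succ_top (by omega : 1 ≤ n + 1), ih (by omega)]
        simp
    rw [← Finset.sum_mul, htel2 k hk.2]
  -- put everything together
  have hLHS : ∑ i ∈ Finset.range d, Real.sqrt (ν i / (i + 1))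
      ≤ ∑ l ∈ Finset.Icc 1 L, (Real.sqrt (m l) - Real.sqrt (m (l - 1))) * (2 * S l) := by
    rw [← hmL, hdecomp L le_rfl]
    refine Finset.sum_le_sum fun l hl => ?_
    rw [Finset.mem_Icc] at hl
    have h1 := hblock l hl.1 hl.2
    have h2 := hkey l hl.1 hl.2
    have hmle : m (l - 1) ≤ m l := hm_mono l hl.2 (l - 1) (by omega)
    have hsz : Real.sqrt (m (l - 1)) ≤ Real.sqrt (m l) := by
      apply Real.sqrt_le_sqrt; exact_mod_cast hmle
    calc ∑ i ∈ Finset.Ico (m (l - 1)) (m l), Real.sqrt (ν i / (i + 1))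
        ≤ (Real.sqrt (m l) - Real.sqrt (m (l - 1))) * (2 * Real.sqrt (ν (m (l - 1)))) := h1
      _ ≤ (Real.sqrt (m l) - Real.sqrt (m (l - 1))) * (2 * S l) := by
          apply mul_le_mul_of_nonneg_left (by linarith) (by linarith)
  have hRHS : ∑ l ∈ Finset.Icc 1 L, Real.sqrt ((m l : ℝ) * variance (fun ω => φ l ω - φ (l - 1) ω) μ)
      = ∑ k ∈ Finset.Icc 1 L, Real.sqrt (m k) * σ k := by
    refine Finset.sum_congr rfl fun k _ => ?_
    rw [Real.sqrt_mul (Nat.cast_nonneg _)]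
  calc ∑ i ∈ Finset.range d, Real.sqrt (ν i / (i + 1))
      ≤ ∑ l ∈ Finset.Icc 1 L, (Real.sqrt (m l) - Real.sqrt (m (l - 1))) * (2 * S l) := hLHS
    _ = 2 * ∑ l ∈ Finset.Icc 1 L, (Real.sqrt (m l) - Real.sqrt (m (l - 1))) * S l := by
        rw [Finset.mul_sum]; refine Finset.sum_congr rfl fun l _ => ?_; ring
    _ = 2 * ∑ k ∈ Finset.Icc 1 L, Real.sqrt (m k) * σ k := by rw [hswap]
    _ = _ := by rw [hRHS]
end
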